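/- Let K be a field and M a p × q matrix over K of rank ρ. Then the maximum possible number of distinct standard unit vectors appearing as columns of QM, over all invertible p × p matrices Q, equals ρ. Consequently, M is in reduced echelon form (in the sense of maximizing this count) if and only if ρ distinct standard unit vectors occur among its columns. -/

import Mathlib

open Matrix Submodule

/-- Over a field, the maximum number of distinct standard unit vectors among the columns
of QM over all invertible Q equals rank M; and M is in reduced echelon form (attains
this maximum itself) iff rank M distinct standard unit vectors occur among its columns. -/
theorem stmt_13 {K : Type*} [Field K] [DecidableEq K] {p q : ℕ}
    (M : Matrix (Fin p) (Fin q) K) :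
    let count : Matrix (Fin p) (Fin q) K → ℕ := fun N =>
      (Finset.univ.filter (fun i : Fin p =>
        ∃ j : Fin q, ∀ r : Fin p, N r j = if r = i then 1 else 0)).card
    IsGreatest { t : ℕ | ∃ Q : Matrix (Fin p) (Fin p) K, IsUnit Q ∧ count (Q * M) = t }
      M.rank ∧
    ((∀ Q : Matrix (Fin p) (Fin p) K, IsUnit Q → count (Q * M) ≤ count M) ↔
      count M = M.rank) := by
  classical
  intro count
  -- Upper bound: the number of distinct unit vector columns is at most the rank.
  have hub : ∀ N : Matrix (Fin p) (Fin q) K, count N ≤ N.rank := by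
    intro N
    set S := Finset.univ.filter (fun i : Fin p =>
        ∃ j : Fin q, ∀ r : Fin p, N r j = if r = i then 1 else 0) with hS
    have hmem : ∀ i : Fin p, i ∈ S → (Pi.single i 1 : Fin p → K) ∈ LinearMap.range N.mulVecLin := by
      intro i hi
      rw [hS, Finset.mem_filter] at hi
      obtain ⟨-, j, hj⟩ := hi
      refine ⟨Pi.single j 1, ?_⟩
      funext r
      simp [Matrix.mulVecLin_apply, Matrix.mulVec, dotProduct, Pi.single_apply,
        mul_comm, hj r]
    -- the family of unit vectors indexed by S, inside the range
    let g : {i // i ∈ S} → LinearMap.range N.mulVecLin :=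
      fun i => ⟨Pi.single i.1 1, hmem i.1 i.2⟩
    have hli : LinearIndependent K g := by
      apply LinearIndependent.of_comp (LinearMap.range N.mulVecLin).subtype
      have : ((LinearMap.range N.mulVecLin).subtype ∘ g)
          = (Pi.basisFun K (Fin p)) ∘ (Subtype.val : {i // i ∈ S} → Fin p) := by
        funext i; simp [g]
      rw [this]
      exact (Pi.basisFun K (Fin p)).linearIndependent.comp _ Subtype.val_injective
    have := hli.fintype_card_le_finrank
    simpa [Matrix.rank, Fintype.card_coe] using this
  -- rank invariance under invertible Q
  have hrk : ∀ Q : Matrix (Fin p) (Fin p) K, IsUnit Q → (Q * M).rank = M.rank := by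
    intro Q hQ
    exact Matrix.rank_mul_eq_right_of_isUnit_det Q M ((Matrix.isUnit_iff_isUnit_det Q).mp hQ)
  -- Existence: an invertible Q achieving count = rank
  obtain ⟨t, hts, htspan, htli⟩ := exists_linearIndependent K (Set.range Mᵀ)
  have htfin : t.Finite := (Set.finite_range Mᵀ).subset hts
  haveI : Fintype t := htfin.fintype
  have htli : LinearIndepOn K id t := htli
  have hrank_card : M.rank = t.toFinset.card := by
    rw [Matrix.rank_eq_finrank_span_cols, show M.col = Mᵀ from rfl, ← htspan, finrank_span_set_eq_card htli]
  let b := htli.extend (Set.subset_univ t)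
  let B : Module.Basis b K (Fin p → K) := Module.Basis.extend htli
  let e : b ≃ Fin p := B.indexEquiv (Pi.basisFun K (Fin p))
  let Qlin : (Fin p → K) ≃ₗ[K] (Fin p → K) := B.equiv (Pi.basisFun K (Fin p)) e
  let Q : Matrix (Fin p) (Fin p) K := LinearMap.toMatrix' Qlin.toLinearMap
  have hQunit : IsUnit Q := by
    have h1 : Q * LinearMap.toMatrix' Qlin.symm.toLinearMap = 1 := by
      rw [← LinearMap.toMatrix'_comp]
      simp
    have := invertibleOfRightInverse _ _ h1
    exact isUnit_of_invertible Q
  have hmulvec : ∀ v : Fin p → K, Q *ᵥ v = Qlin v := by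
    intro v
    have : Matrix.toLin' Q v = Qlin v := by
      rw [show Q = LinearMap.toMatrix' Qlin.toLinearMap from rfl, Matrix.toLin'_toMatrix']
      rfl
    simpa [Matrix.toLin'_apply] using this
  -- each element of t gives a unit-vector column of Q * M
  have hkey : ∀ x (hx : x ∈ t), ∃ j : Fin q, ∀ r : Fin p,
      (Q * M) r j = if r = e ⟨x, htli.subset_extend _ hx⟩ then 1 else 0 := by
    intro x hx
    obtain ⟨j, hj⟩ := hts hx
    refine ⟨j, fun r => ?_⟩
    have hx' : x ∈ b := htli.subset_extend _ hx
    have hcol : Q *ᵥ Mᵀ j = Pi.single (e ⟨x, hx'⟩) 1 := by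
      rw [hmulvec, hj]
      have hBx : B ⟨x, hx'⟩ = x := Module.Basis.extend_apply_self htli ⟨x, hx'⟩
      calc Qlin x = Qlin (B ⟨x, hx'⟩) := by rw [hBx]
        _ = Pi.basisFun K (Fin p) (e ⟨x, hx'⟩) := Module.Basis.equiv_apply _ _ _ _
        _ = Pi.single (e ⟨x, hx'⟩) 1 := Pi.basisFun_apply _ _ _
    have : (Q * M) r j = (Q *ᵥ Mᵀ j) r := by
      simp [Matrix.mul_apply, Matrix.mulVec, dotProduct, Matrix.transpose_apply]
    rw [this, hcol, Pi.single_apply]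
  have hcount_ge : M.rank ≤ count (Q * M) := by
    rw [hrank_card]
    have hc : Fintype.card t ≤ Fintype.card {i : Fin p //
        ∃ j : Fin q, ∀ r : Fin p, (Q * M) r j = if r = i then 1 else 0} := by
      apply Fintype.card_le_of_injective
        (fun x => ⟨e ⟨x.1, htli.subset_extend _ x.2⟩, hkey x.1 x.2⟩)
      intro x y hxy
      have h1 := congrArg Subtype.val hxy
      simp only at h1
      have h2 := e.injective h1
      have h3 := Subtype.ext_iff.mp h2
      exact Subtype.ext h3
    rw [Set.toFinset_card]
    calc Fintype.card t ≤ _ := hc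
      _ = count (Q * M) := by
        simp only [count]
        rw [Fintype.card_subtype]
  have hcount_eq : count (Q * M) = M.rank :=
    le_antisymm ((hub (Q * M)).trans_eq (hrk Q hQunit)) hcount_ge
  constructor
  · constructor
    · exact ⟨Q, hQunit, hcount_eq⟩
    · rintro s ⟨Q', hQ', rfl⟩
      exact (hub (Q' * M)).trans_eq (hrk Q' hQ')
  · constructor
    · intro h
      refine le_antisymm (hub M) ?_
      calc M.rank = count (Q * M) := hcount_eq.symm
        _ ≤ count M := h Q hQunit
    · intro h Q' hQ'
      calc count (Q' * M) ≤ (Q' * M).rank := hub (Q' * M)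
        _ = M.rank := hrk Q' hQ'
        _ = count M := h.symm
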